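/- Suppose n = 2m. Fix an observed count vector n⃗ and a count vector v = (v₁₁, v₁₀, v₀₁, v₀₀) with min(v₁₀, v₀₁) ≥ 1, and define v' = (v₁₁+1, v₁₀−1, v₀₁−1, v₀₀+1) and v° = (v₁₁, v₁₀−1, v₀₁−1, v₀₀). If the probability mass function of T(v°, Z'), where Z' is uniform on Z(n−2), is symmetric–decreasing on the lattice (m−1)^{-1}ℤ, then p(v', n⃗) ≥ p(v, n⃗). -/

import Mathlib

open Finset

/-- Real value of a binary outcome. -/
noncomputable def b2r (b : Bool) : ℝ := if b then 1 else 0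

/-- All assignments of `n` subjects in which exactly `m` receive treatment. -/
def Assign (n m : ℕ) : Finset (Fin n → Bool) :=
  Finset.univ.filter fun z => (Finset.univ.filter fun i => z i = true).card = m

/-- Probability of the event `E` under the uniform distribution on `Assign n m`. -/
noncomputable def Pr (n m : ℕ) (E : (Fin n → Bool) → Prop) : ℝ :=
  haveI : DecidablePred E := fun z => Classical.propDecidable (E z)
  (((Assign n m).filter E).card : ℝ) / ((Assign n m).card : ℝ)

/-- The sample average treatment effect `τ(w)`.  For a table `w`, `(w i).1` is the
control potential outcome `w_i(0)` and `(w i).2` is the treatment potential outcome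
`w_i(1)`. -/
noncomputable def sate (n : ℕ) (w : Fin n → Bool × Bool) : ℝ :=
  (∑ j, (b2r (w j).2 - b2r (w j).1)) / (n : ℝ)

/-- Observed outcomes generated by the table `w` under the assignment `z`. -/
def obsOutcome (n : ℕ) (w : Fin n → Bool × Bool) (z : Fin n → Bool) : Fin n → Bool :=
  fun j => if z j then (w j).2 else (w j).1

/-- The Neyman difference-in-means estimator `T(Y, z)`. -/
noncomputable def neyman (n m : ℕ) (Y z : Fin n → Bool) : ℝ :=
  (∑ j, if z j then b2r (Y j) else 0) / (m : ℝ)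
    - (∑ j, if z j then 0 else b2r (Y j)) / ((n : ℝ) - (m : ℝ))

/-- Permutation `p`-value of the table `w` given observed data `(Y, z)`. -/
noncomputable def pval (n m : ℕ) (w : Fin n → Bool × Bool) (Y z : Fin n → Bool) : ℝ :=
  Pr n m fun z' =>
    |neyman n m (obsOutcome n w z') z' - sate n w| ≥ |neyman n m Y z - sate n w|

/-- The table `w` is possible given the observed data `(Y, z)`. -/
def PossibleTable (n : ℕ) (w : Fin n → Bool × Bool) (Y z : Fin n → Bool) : Prop :=
  ∀ j, (z j = true → (w j).2 = Y j) ∧ (z j = false → (w j).1 = Y j)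

/-- Lower endpoint `L_α` of the exact confidence interval `I_α`. -/
noncomputable def Lb (n m : ℕ) (α : ℝ) (Y z : Fin n → Bool) : ℝ :=
  sInf {t : ℝ | ∃ w, PossibleTable n w Y z ∧ α ≤ pval n m w Y z ∧ sate n w = t}

/-- Upper endpoint `U_α` of the exact confidence interval `I_α`. -/
noncomputable def Ub (n m : ℕ) (α : ℝ) (Y z : Fin n → Bool) : ℝ :=
  sSup {t : ℝ | ∃ w, PossibleTable n w Y z ∧ α ≤ pval n m w Y z ∧ sate n w = t}

/-- `vcount n w a b` is the number of subjects whose treatment potential outcome is `a`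
and whose control potential outcome is `b`; e.g. `vcount n w true false = v₁₀`. -/
def vcount (n : ℕ) (w : Fin n → Bool × Bool) (a b : Bool) : ℕ :=
  (Finset.univ.filter fun i => (w i).2 = a ∧ (w i).1 = b).card

/-- `ncount n Y z a b = n_{ab}`, the number of subjects with assignment `a` and
observed outcome `b`. -/
def ncount (n : ℕ) (Y z : Fin n → Bool) (a b : Bool) : ℕ :=
  (Finset.univ.filter fun j => z j = a ∧ Y j = b).card

/-- The pmf of the Neyman estimator `T(w, Z)` under the uniform random assignment. -/
noncomputable def pmfT (n m : ℕ) (w : Fin n → Bool × Bool) : ℝ → ℝ :=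
  fun t => Pr n m fun z => neyman n m (obsOutcome n w z) z = t

/-- The lattice `m⁻¹ ℤ ⊆ ℝ`. -/
def lattZ (m : ℕ) : Set ℝ := {x | ∃ k : ℤ, x = (k : ℝ) / (m : ℝ)}

/-- The lattice `m⁻¹ (2ℤ) ⊆ ℝ`. -/
def lattEven (m : ℕ) : Set ℝ := {x | ∃ k : ℤ, x = (2 * (k : ℝ)) / (m : ℝ)}

/-- The lattice `m⁻¹ (2ℤ + 1) ⊆ ℝ`. -/
def lattOdd (m : ℕ) : Set ℝ := {x | ∃ k : ℤ, x = (2 * (k : ℝ) + 1) / (m : ℝ)}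

/-- `f` is symmetric about `μ` and decreasing away from `μ` along the lattice `L`
(symmetric–decreasing, SD). -/
def SDon (f : ℝ → ℝ) (L : Set ℝ) (μ : ℝ) : Prop :=
  (∀ x : ℝ, μ + x ∈ L → f (μ - x) = f (μ + x)) ∧
    ∀ x y : ℝ, 0 ≤ x → x ≤ y → μ + x ∈ L → μ + y ∈ L → f (μ + y) ≤ f (μ + x)

open Finset in
lemma vcount_eq_card_fiber (n : ℕ) (u : Fin n → Bool × Bool) (a b : Bool) :
    vcount n u a b = (univ.filter fun i => u i = (b, a)).card := by
  unfold vcount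
  congr 1
  apply Finset.filter_congr
  intro i _
  simp [Prod.ext_iff, and_comm]

open Finset in
lemma card_snd_true (n : ℕ) (u : Fin n → Bool × Bool) :
    (univ.filter fun j => (u j).2 = true).card
      = vcount n u true true + vcount n u true false := by
  rw [vcount_eq_card_fiber, vcount_eq_card_fiber]
  rw [Finset.card_filter, Finset.card_filter, Finset.card_filter, ← Finset.sum_add_distrib]
  apply Finset.sum_congr rfl
  intro j _
  rcases u j with ⟨c, t⟩
  rcases c <;> rcases t <;> simp [Prod.ext_iff]

open Finset in
lemma card_fst_true (n : ℕ) (u : Fin n → Bool × Bool) :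
    (univ.filter fun j => (u j).1 = true).card
      = vcount n u true true + vcount n u false true := by
  rw [vcount_eq_card_fiber, vcount_eq_card_fiber]
  rw [Finset.card_filter, Finset.card_filter, Finset.card_filter, ← Finset.sum_add_distrib]
  apply Finset.sum_congr rfl
  intro j _
  rcases u j with ⟨c, t⟩
  rcases c <;> rcases t <;> simp [Prod.ext_iff]

open Finset in
lemma sum_b2r_snd (n : ℕ) (u : Fin n → Bool × Bool) :
    ∑ j, b2r (u j).2 = ((univ.filter fun j => (u j).2 = true).card : ℝ) := by
  rw [Finset.card_filter]
  push_cast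
  apply Finset.sum_congr rfl
  intro j _
  rcases h : (u j).2 <;> simp [b2r, h]

open Finset in
lemma sum_b2r_fst (n : ℕ) (u : Fin n → Bool × Bool) :
    ∑ j, b2r (u j).1 = ((univ.filter fun j => (u j).1 = true).card : ℝ) := by
  rw [Finset.card_filter]
  push_cast
  apply Finset.sum_congr rfl
  intro j _
  rcases h : (u j).1 <;> simp [b2r, h]

lemma sate_counts (n : ℕ) (u : Fin n → Bool × Bool) :
    sate n u = (((vcount n u true false : ℤ) - (vcount n u false true : ℤ) : ℤ) : ℝ) / n := by
  unfold sate
  rw [Finset.sum_sub_distrib, sum_b2r_snd, sum_b2r_fst, card_snd_true, card_fst_true]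
  push_cast
  ring_nf
open Finset in
lemma mem_assign_comp (n m : ℕ) (σ : Equiv.Perm (Fin n)) (z : Fin n → Bool) :
    (z ∘ σ) ∈ Assign n m ↔ z ∈ Assign n m := by
  unfold Assign
  simp only [Finset.mem_filter, Finset.mem_univ, true_and]
  constructor <;> intro h <;> rw [← h]
  · apply Finset.card_bij' (fun i _ => σ.symm i) (fun i _ => σ i) <;>
      simp [Function.comp]
  · apply Finset.card_bij' (fun i _ => σ i) (fun i _ => σ.symm i) <;>
      simp [Function.comp]

open Finset in
lemma neyman_comp (n m : ℕ) (u : Fin n → Bool × Bool) (σ : Equiv.Perm (Fin n))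
    (z : Fin n → Bool) :
    neyman n m (obsOutcome n (u ∘ σ) z) z
      = neyman n m (obsOutcome n u (z ∘ σ.symm)) (z ∘ σ.symm) := by
  unfold neyman obsOutcome
  congr 1
  · congr 1
    rw [← Equiv.sum_comp σ (fun i => if (z ∘ σ.symm) i then b2r (if (z ∘ σ.symm) i then (u i).2 else (u i).1) else 0)]
    apply Finset.sum_congr rfl
    intro j _
    simp [Function.comp]
  · congr 1
    rw [← Equiv.sum_comp σ (fun i => if (z ∘ σ.symm) i then 0 else b2r (if (z ∘ σ.symm) i then (u i).2 else (u i).1))]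
    apply Finset.sum_congr rfl
    intro j _
    simp [Function.comp]

lemma sate_comp (n : ℕ) (u : Fin n → Bool × Bool) (σ : Equiv.Perm (Fin n)) :
    sate n (u ∘ σ) = sate n u := by
  unfold sate
  congr 1
  exact Equiv.sum_comp σ (fun i => b2r (u i).2 - b2r (u i).1)

open Finset in
lemma pval_comp (n m : ℕ) (u : Fin n → Bool × Bool) (σ : Equiv.Perm (Fin n))
    (Y z : Fin n → Bool) :
    pval n m (u ∘ σ) Y z = pval n m u Y z := by
  classical
  unfold pval Pr
  rw [sate_comp]
  congr 1
  norm_cast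
  apply Finset.card_bij' (fun z' _ => z' ∘ σ.symm) (fun y _ => y ∘ σ)
  · intro z' hz'
    simp only [Finset.mem_filter] at hz' ⊢
    refine ⟨(mem_assign_comp n m σ.symm z').mpr hz'.1, ?_⟩
    have := hz'.2
    rwa [neyman_comp n m u σ z'] at this
  · intro y hy
    simp only [Finset.mem_filter] at hy ⊢
    refine ⟨(mem_assign_comp n m σ y).mpr hy.1, ?_⟩
    rw [neyman_comp n m u σ (y ∘ σ)]
    have : (y ∘ σ) ∘ σ.symm = y := by funext i; simp [Function.comp]
    rw [this]
    exact hy.2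
  · intro z' _; funext i; simp [Function.comp]
  · intro y _; funext i; simp [Function.comp]

open Finset in
lemma exists_perm_comp {α β : Type*} [Fintype α] [DecidableEq α] [DecidableEq β]
    (f g : α → β)
    (h : ∀ b, (univ.filter fun a => f a = b).card = (univ.filter fun a => g a = b).card) :
    ∃ σ : Equiv.Perm α, f = g ∘ σ := by
  have hc : ∀ b, Fintype.card {a // f a = b} = Fintype.card {a // g a = b} := by
    intro b
    rw [Fintype.card_subtype, Fintype.card_subtype]
    exact h b
  have e : ∀ b, {a // f a = b} ≃ {a // g a = b} := fun b => Fintype.equivOfCardEq (hc b)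
  refine ⟨(Equiv.sigmaFiberEquiv f).symm.trans ((Equiv.sigmaCongrRight e).trans
    (Equiv.sigmaFiberEquiv g)), ?_⟩
  funext a
  simp only [Function.comp, Equiv.trans_apply, Equiv.sigmaCongrRight_apply]
  have h1 : (Equiv.sigmaFiberEquiv f).symm a = ⟨f a, ⟨a, rfl⟩⟩ := rfl
  rw [h1]
  exact ((e (f a)) ⟨a, rfl⟩).2.symm
open Finset in
lemma pval_eq_of_vcount (n m : ℕ) (u u' : Fin n → Bool × Bool) (Y z : Fin n → Bool)
    (h : ∀ a b, vcount n u a b = vcount n u' a b) :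
    pval n m u Y z = pval n m u' Y z := by
  obtain ⟨σ, hσ⟩ := exists_perm_comp u u' (by
    intro p
    have := h p.2 p.1
    rw [vcount_eq_card_fiber, vcount_eq_card_fiber] at this
    simpa using this)
  rw [show u = u' ∘ σ from hσ, pval_comp]

/-- Integer-valued difference statistic. -/
def intStat (n : ℕ) (u : Fin n → Bool × Bool) (z : Fin n → Bool) : ℤ :=
  (∑ j, if z j then (if (u j).2 then (1:ℤ) else 0) else 0)
    - ∑ j, if z j then 0 else (if (u j).1 then (1:ℤ) else 0)

open Finset in
lemma neyman_intStat (n' m' : ℕ) (hn' : n' = 2 * m') (u : Fin n' → Bool × Bool)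
    (z : Fin n' → Bool) :
    neyman n' m' (obsOutcome n' u z) z = (intStat n' u z : ℝ) / (m' : ℝ) := by
  unfold neyman obsOutcome intStat
  have hnm : (n' : ℝ) - (m' : ℝ) = m' := by subst hn'; push_cast; ring
  rw [hnm]
  rw [div_sub_div_same]
  push_cast
  congr 1
  congr 1
  · apply Finset.sum_congr rfl
    intro j _
    rcases hzj : z j <;> rcases hu : (u j).2 <;> simp [b2r, hzj, hu]
  · apply Finset.sum_congr rfl
    intro j _
    rcases hzj : z j <;> rcases hu : (u j).1 <;> simp [b2r, hzj, hu]

open Finset in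
lemma card_sub_two {n : ℕ} (i₀ i₁ : Fin n) (hne : i₀ ≠ i₁) :
    Fintype.card {i : Fin n // ¬(i = i₀ ∨ i = i₁)} = n - 2 := by
  rw [Fintype.card_subtype_compl]
  congr 1
  · exact Fintype.card_fin n
  · rw [Fintype.card_subtype]
    have : (univ.filter fun i : Fin n => i = i₀ ∨ i = i₁) = {i₀, i₁} := by
      ext i; simp
    rw [this, Finset.card_insert_of_notMem (by simpa using hne), Finset.card_singleton]

open Finset in
lemma sum_split {n : ℕ} (i₀ i₁ : Fin n) (hne : i₀ ≠ i₁)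
    (e : {i : Fin n // ¬(i = i₀ ∨ i = i₁)} ≃ Fin (n - 2))
    {M : Type*} [AddCommMonoid M] (F : Fin n → M) :
    ∑ j, F j = F i₀ + F i₁ + ∑ k : Fin (n - 2), F (e.symm k).val := by
  have h1 : ∑ k : Fin (n - 2), F (e.symm k).val
      = ∑ s : {i : Fin n // ¬(i = i₀ ∨ i = i₁)}, F s.val :=
    Equiv.sum_comp e.symm (fun s => F s.val)
  have h2 : ∑ s : {i : Fin n // ¬(i = i₀ ∨ i = i₁)}, F s.val
      = ∑ i ∈ univ \ {i₀, i₁}, F i := by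
    rw [← Finset.sum_subtype (univ \ ({i₀, i₁} : Finset (Fin n)))
      (by intro i; simp [not_or]) F]
  have h3 : ({i₀, i₁} : Finset (Fin n)) ⊆ univ := Finset.subset_univ _
  rw [h1, h2, ← Finset.sum_sdiff h3, Finset.sum_pair hne]
  exact add_comm _ _
section Split

variable {n : ℕ} (i₀ i₁ : Fin n) (e : {i : Fin n // ¬(i = i₀ ∨ i = i₁)} ≃ Fin (n - 2))

/-- Restriction of an assignment to the complement of `{i₀, i₁}`. -/
def resz (z : Fin n → Bool) : Fin (n - 2) → Bool := fun k => z (e.symm k).val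

/-- Restriction of a table to the complement of `{i₀, i₁}`. -/
def resw (u : Fin n → Bool × Bool) : Fin (n - 2) → Bool × Bool := fun k => u (e.symm k).val

/-- Extension of an assignment on the complement by prescribed values at `i₀, i₁`. -/
def extz (a b : Bool) (z'' : Fin (n - 2) → Bool) : Fin n → Bool :=
  fun i => if h₀ : i = i₀ then a else if h₁ : i = i₁ then b
    else z'' (e ⟨i, by simp [h₀, h₁]⟩)

lemma resz_extz (a b : Bool) (z'' : Fin (n - 2) → Bool) :
    resz i₀ i₁ e (extz i₀ i₁ e a b z'') = z'' := by
  funext k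
  unfold resz extz
  have hs := (e.symm k).2
  rw [dif_neg (fun h => hs (Or.inl h)), dif_neg (fun h => hs (Or.inr h))]
  congr 1
  rw [show (⟨(e.symm k).val, _⟩ : {i : Fin n // ¬(i = i₀ ∨ i = i₁)}) = e.symm k from
    Subtype.ext rfl]
  exact e.apply_symm_apply k

lemma extz_resz (hne : i₀ ≠ i₁) (z : Fin n → Bool) :
    extz i₀ i₁ e (z i₀) (z i₁) (resz i₀ i₁ e z) = z := by
  funext i
  unfold extz resz
  by_cases h₀ : i = i₀
  · rw [dif_pos h₀, h₀]
  · by_cases h₁ : i = i₁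
    · rw [dif_neg h₀, dif_pos h₁, h₁]
    · rw [dif_neg h₀, dif_neg h₁]
      congr 1
      exact congrArg Subtype.val (e.symm_apply_apply ⟨i, by simp [h₀, h₁]⟩)

lemma extz_apply_i₀ (hne : i₀ ≠ i₁) (a b : Bool) (z'' : Fin (n - 2) → Bool) :
    extz i₀ i₁ e a b z'' i₀ = a := by
  unfold extz; rw [dif_pos rfl]

lemma extz_apply_i₁ (hne : i₀ ≠ i₁) (a b : Bool) (z'' : Fin (n - 2) → Bool) :
    extz i₀ i₁ e a b z'' i₁ = b := by
  unfold extz; rw [dif_neg (Ne.symm hne), dif_pos rfl]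

open Finset in
lemma card_trues_split (hne : i₀ ≠ i₁) (z : Fin n → Bool) :
    (univ.filter fun i => z i = true).card
      = ((if z i₀ then 1 else 0) + (if z i₁ then 1 else 0))
        + (univ.filter fun k => resz i₀ i₁ e z k = true).card := by
  rw [Finset.card_filter, Finset.card_filter]
  rw [sum_split i₀ i₁ hne e (fun j => if z j = true then 1 else 0)]
  simp only [resz]
  rfl

open Finset in
lemma mem_assign_split (hne : i₀ ≠ i₁) {m : ℕ} (z : Fin n → Bool) :
    z ∈ Assign n m ↔
      ((if z i₀ then 1 else 0) + (if z i₁ then 1 else 0))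
        + (univ.filter fun k => resz i₀ i₁ e z k = true).card = m := by
  unfold Assign
  simp only [Finset.mem_filter, Finset.mem_univ, true_and]
  rw [card_trues_split i₀ i₁ e hne z]

open Finset in
lemma card_pattern_bij (hne : i₀ ≠ i₁) {m : ℕ} (a b : Bool) (m'' : ℕ)
    (hm'' : ((if a then 1 else 0) + (if b then 1 else 0)) + m'' = m)
    (P : (Fin n → Bool) → Prop) [DecidablePred P]
    (Q : (Fin (n - 2) → Bool) → Prop) [DecidablePred Q]
    (hPQ : ∀ z, z i₀ = a → z i₁ = b → (P z ↔ Q (resz i₀ i₁ e z))) :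
    ((Assign n m).filter fun z => (z i₀ = a ∧ z i₁ = b) ∧ P z).card
      = ((Assign (n - 2) m'').filter Q).card := by
  apply Finset.card_bij' (fun z _ => resz i₀ i₁ e z) (fun z'' _ => extz i₀ i₁ e a b z'')
  · intro z hzm
    simp only [Finset.mem_filter] at hzm ⊢
    obtain ⟨hz1, ⟨hpa, hpb⟩, hP⟩ := hzm
    constructor
    · rw [mem_assign_split i₀ i₁ e hne z, hpa, hpb] at hz1
      unfold Assign
      simp only [Finset.mem_filter, Finset.mem_univ, true_and]
      omega
    · exact (hPQ z hpa hpb).mp hP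
  · intro z'' hz''
    simp only [Finset.mem_filter] at hz'' ⊢
    obtain ⟨hz1, hQ⟩ := hz''
    have ha := extz_apply_i₀ i₀ i₁ e hne a b z''
    have hb := extz_apply_i₁ i₀ i₁ e hne a b z''
    have hres := resz_extz i₀ i₁ e a b z''
    refine ⟨?_, ⟨ha, hb⟩, ?_⟩
    · rw [mem_assign_split i₀ i₁ e hne _, ha, hb, hres]
      unfold Assign at hz1
      simp only [Finset.mem_filter, Finset.mem_univ, true_and] at hz1
      omega
    · rw [hPQ _ ha hb, hres]
      exact hQ
  · intro z hzm
    simp only [Finset.mem_filter] at hzm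
    obtain ⟨_, ⟨hpa, hpb⟩, _⟩ := hzm
    rw [← hpa, ← hpb]
    exact extz_resz i₀ i₁ e hne z
  · intro z'' _
    exact resz_extz i₀ i₁ e a b z''

/-- Per-unit contribution to the integer statistic. -/
def tval (p : Bool × Bool) (zz : Bool) : ℤ :=
  (if zz then (if p.2 then 1 else 0) else 0) - (if zz then 0 else if p.1 then 1 else 0)

open Finset in
lemma intStat_split (hne : i₀ ≠ i₁) (u : Fin n → Bool × Bool) (z : Fin n → Bool) :
    intStat n u z = tval (u i₀) (z i₀) + tval (u i₁) (z i₁)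
      + intStat (n - 2) (resw i₀ i₁ e u) (resz i₀ i₁ e z) := by
  unfold intStat tval
  rw [sum_split i₀ i₁ hne e (fun j => if z j then (if (u j).2 then (1:ℤ) else 0) else 0),
    sum_split i₀ i₁ hne e (fun j => if z j then 0 else (if (u j).1 then (1:ℤ) else 0))]
  unfold resw resz
  ring

open Finset in
lemma card_filter_pattern_split {m : ℕ} (P : (Fin n → Bool) → Prop) [DecidablePred P] :
    ((Assign n m).filter P).card =
      ((Assign n m).filter fun z => (z i₀ = true ∧ z i₁ = true) ∧ P z).card
      + ((Assign n m).filter fun z => (z i₀ = true ∧ z i₁ = false) ∧ P z).card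
      + (((Assign n m).filter fun z => (z i₀ = false ∧ z i₁ = true) ∧ P z).card
      + ((Assign n m).filter fun z => (z i₀ = false ∧ z i₁ = false) ∧ P z).card) := by
  rw [Finset.card_filter, Finset.card_filter, Finset.card_filter, Finset.card_filter,
    Finset.card_filter, ← Finset.sum_add_distrib, ← Finset.sum_add_distrib,
    ← Finset.sum_add_distrib]
  apply Finset.sum_congr rfl
  intro z _
  rcases h0 : z i₀ <;> rcases h1 : z i₁ <;> by_cases hP : P z <;> simp [h0, h1, hP]

end Split
section Discrete

lemma gmono (g : ℤ → ℕ) (d : ℤ)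
    (gsym : ∀ j : ℤ, g (d - j) = g j)
    (gdec : ∀ p q : ℤ, d ≤ 2 * p → p ≤ q → g q ≤ g p)
    (p q : ℤ) (h : |2 * p - d| ≤ |2 * q - d|) : g q ≤ g p := by
  rcases le_or_gt d (2 * q) with hq | hq
  · rcases le_or_gt d (2 * p) with hp | hp
    · refine gdec p q hp ?_
      rw [abs_of_nonneg (by omega), abs_of_nonneg (by omega)] at h
      omega
    · have h2 := gdec (d - p) q (by omega) (by
        rw [abs_of_nonpos (by omega), abs_of_nonneg (by omega)] at h
        omega)
      rwa [gsym p] at h2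
  · rcases le_or_gt d (2 * p) with hp | hp
    · have h2 := gdec p (d - q) hp (by
        rw [abs_of_nonneg (by omega), abs_of_nonpos (by omega)] at h
        omega)
      rwa [gsym q] at h2
    · have h2 := gdec (d - p) (d - q) (by omega) (by
        rw [abs_of_nonpos (by omega), abs_of_nonpos (by omega)] at h
        omega)
      rwa [gsym p, gsym q] at h2

open Finset in
lemma sd_shift_le (g : ℤ → ℕ) (d : ℤ) (R : ℝ)
    (gsym : ∀ j : ℤ, g (d - j) = g j)
    (gdec : ∀ p q : ℤ, d ≤ 2 * p → p ≤ q → g q ≤ g p)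
    (t : ℤ) (ht : t = 1 ∨ t = -1)
    (K : Finset ℤ)
    (hK : ∀ j : ℤ, (|2 * (j:ℝ) - d| < R ∨ |2 * (j:ℝ) - d - 2 * t| < R) → j ∈ K) :
    ∑ j ∈ K.filter (fun j : ℤ => |2 * (j:ℝ) - d - 2 * t| < R), g j
      ≤ ∑ j ∈ K.filter (fun j : ℤ => |2 * (j:ℝ) - d| < R), g j := by
  classical
  set S := K.filter (fun j : ℤ => |2 * (j:ℝ) - d - 2 * t| < R) with hS
  set C := K.filter (fun j : ℤ => |2 * (j:ℝ) - d| < R) with hC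
  have hmemS : ∀ j : ℤ, j ∈ S ↔ |2 * (j:ℝ) - d - 2 * t| < R := by
    intro j
    simp only [hS, Finset.mem_filter, and_iff_right_iff_imp]
    intro h; exact hK j (Or.inr h)
  have hmemC : ∀ j : ℤ, j ∈ C ↔ |2 * (j:ℝ) - d| < R := by
    intro j
    simp only [hC, Finset.mem_filter, and_iff_right_iff_imp]
    intro h; exact hK j (Or.inl h)
  have hcard : C.card = S.card := by
    apply Finset.card_bij' (fun j _ => j + t) (fun j _ => j - t)
    · intro j hj
      rw [hmemC] at hj
      rw [hmemS]
      have he : (2 * ((j + t : ℤ) : ℝ) - d - 2 * t) = 2 * (j:ℝ) - d := by push_cast; ring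
      rw [he]; exact hj
    · intro j hj
      rw [hmemS] at hj
      rw [hmemC]
      have he : (2 * ((j - t : ℤ) : ℝ) - d) = 2 * (j:ℝ) - d - 2 * t := by push_cast; ring
      rw [he]; exact hj
    · intro j _; omega
    · intro j _; omega
  have hbig : ∀ a ∈ S \ C, R ≤ |2 * (a:ℝ) - d| := by
    intro a ha
    rw [Finset.mem_sdiff, hmemS, hmemC] at ha
    exact le_of_not_gt ha.2
  have key : ∀ b ∈ S \ C, R ≤ (2 * (b:ℝ) - d) * t ∧ (2 * (b:ℝ) - d) * t < 2 + R := by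
    intro b hb
    have h1 := hbig b hb
    have h2 : |2 * (b:ℝ) - d - 2 * t| < R := by
      rw [Finset.mem_sdiff, hmemS] at hb
      exact hb.1
    rcases abs_lt.mp h2 with ⟨l, r⟩
    rcases le_abs.mp h1 with h | h <;> rcases ht with ht | ht <;> subst ht <;>
      push_cast at l r ⊢ <;> constructor <;> nlinarith
  have huniq : ∀ a ∈ S \ C, ∀ a' ∈ S \ C, a = a' := by
    intro a ha a' ha'
    have ka := key a ha
    have ka' := key a' ha'
    have habs : ((a:ℝ) - a') * t < 1 ∧ (-1 : ℝ) < ((a:ℝ) - a') * t := by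
      constructor <;> nlinarith [ka.1, ka.2, ka'.1, ka'.2]
    have : (-1 : ℝ) < ((a - a' : ℤ) : ℝ) * t ∧ ((a - a' : ℤ) : ℝ) * t < 1 := by
      push_cast
      exact ⟨habs.2, habs.1⟩
    have hz1 : (-1 : ℤ) < (a - a') * t := by exact_mod_cast this.1
    have hz2 : ((a - a') * t : ℤ) < 1 := by exact_mod_cast this.2
    rcases ht with ht | ht <;> subst ht <;> omega
  rcases Finset.eq_empty_or_nonempty (S \ C) with hemp | ⟨a, ha⟩
  · have hsub : S ⊆ C := by
      intro x hx
      by_contra hxc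
      have hxm : x ∈ S \ C := Finset.mem_sdiff.mpr ⟨hx, hxc⟩
      rw [hemp] at hxm
      exact absurd hxm (Finset.notMem_empty x)
    exact Finset.sum_le_sum_of_subset hsub
  · have hSC : S \ C = {a} :=
      Finset.eq_singleton_iff_unique_mem.mpr ⟨ha, fun x hx => huniq x hx a ha⟩
    have hcds : (C \ S).card = 1 := by
      have h1 := Finset.card_inter_add_card_sdiff S C
      have h2 := Finset.card_inter_add_card_sdiff C S
      rw [Finset.inter_comm] at h2
      rw [hSC, Finset.card_singleton] at h1
      omega
    obtain ⟨b, hb⟩ := Finset.card_eq_one.mp hcds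
    have hgab : g a ≤ g b := by
      have hbC : |2 * (b:ℝ) - d| < R := by
        have : b ∈ C \ S := by rw [hb]; exact Finset.mem_singleton_self b
        exact (hmemC b).mp (Finset.mem_sdiff.mp this).1
      have haB := hbig a ha
      apply gmono g d gsym gdec
      have hcast : ((|2 * b - d| : ℤ) : ℝ) ≤ ((|2 * a - d| : ℤ) : ℝ) := by
        push_cast
        exact le_of_lt (lt_of_lt_of_le hbC haB)
      exact_mod_cast hcast
    have hs1 := Finset.sum_inter_add_sum_sdiff S C g
    have hs2 := Finset.sum_inter_add_sum_sdiff C S g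
    rw [Finset.inter_comm] at hs2
    rw [hSC, Finset.sum_singleton] at hs1
    rw [hb, Finset.sum_singleton] at hs2
    omega

end Discrete
section Bridge

open Finset

lemma abs_cond_iff (m : ℕ) (hm : 0 < m) (j d : ℤ) (c : ℝ) :
    (|(j:ℝ)/(m:ℝ) - (d:ℝ)/(2*(m:ℝ))| ≥ c) ↔ (2*(m:ℝ)*c ≤ |2*(j:ℝ) - (d:ℝ)|) := by
  have hm' : (0:ℝ) < m := by exact_mod_cast hm
  have he : (j:ℝ)/(m:ℝ) - (d:ℝ)/(2*m) = (2*(j:ℝ) - d)/(2*m) := by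
    field_simp
  rw [he, abs_div, abs_of_pos (show (0:ℝ) < 2*(m:ℝ) by positivity), ge_iff_le, le_div_iff₀ (by positivity)]
  constructor <;> intro h <;> linarith

lemma card_cond_sum {n2 m2 : ℕ} (w0 : Fin n2 → Bool × Bool) (K : Finset ℤ)
    (cond : ℤ → Prop) [DecidablePred cond]
    (hK : ∀ j, cond j → j ∈ K) :
    ((Assign n2 m2).filter fun y => cond (intStat n2 w0 y)).card
      = ∑ j ∈ K.filter cond, ((Assign n2 m2).filter fun y => intStat n2 w0 y = j).card := by
  classical
  rw [Finset.card_eq_sum_card_fiberwise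
    (f := fun y => intStat n2 w0 y) (t := K.filter cond)
    (fun y hy => by
      rw [Finset.mem_coe, Finset.mem_filter] at hy
      exact Finset.mem_filter.mpr ⟨hK _ hy.2, hy.2⟩)]
  apply Finset.sum_congr rfl
  intro j hj
  rw [Finset.mem_filter] at hj
  congr 1
  ext y
  simp only [Finset.mem_filter]
  constructor
  · rintro ⟨⟨hy, _⟩, hiS⟩
    exact ⟨hy, hiS⟩
  · rintro ⟨hy, hiS⟩
    exact ⟨⟨hy, by rw [hiS]; exact hj.2⟩, hiS⟩

lemma card_fiber_split {n : ℕ} (i₀ i₁ : Fin n) (hne : i₀ ≠ i₁)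
    (e : {i : Fin n // ¬(i = i₀ ∨ i = i₁)} ≃ Fin (n - 2))
    (u : Fin n → Bool × Bool) (p : Bool × Bool) :
    (univ.filter fun i => u i = p).card
      = ((if u i₀ = p then 1 else 0) + (if u i₁ = p then 1 else 0))
        + (univ.filter fun k => resw i₀ i₁ e u k = p).card := by
  rw [Finset.card_filter, Finset.card_filter]
  rw [sum_split i₀ i₁ hne e (fun j => if u j = p then 1 else 0)]
  simp only [resw]
  rfl

lemma resw_update {n : ℕ} (i₀ i₁ : Fin n)
    (e : {i : Fin n // ¬(i = i₀ ∨ i = i₁)} ≃ Fin (n - 2))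
    (u : Fin n → Bool × Bool) (p q : Bool × Bool) :
    resw i₀ i₁ e (Function.update (Function.update u i₀ p) i₁ q) = resw i₀ i₁ e u := by
  funext k
  unfold resw
  have hs := (e.symm k).2
  rw [Function.update_of_ne (fun h => hs (Or.inr h)),
    Function.update_of_ne (fun h => hs (Or.inl h))]

end Bridge
lemma arith2 {G0 Gp Gm S0 Sp Sm N2 : ℕ} (h0 : G0 + S0 = N2) (hp : Gp + Sp = N2)
    (hm : Gm + Sm = N2) (h1 : Sm ≤ S0) (h2 : Sp ≤ S0) : G0 + G0 ≤ Gp + Gm := by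
  omega

lemma arith3 {a b G0 Gp Gm : ℕ} (h : G0 + G0 ≤ Gp + Gm) :
    a + G0 + (G0 + b) ≤ a + Gp + (Gm + b) := by
  omega
set_option maxHeartbeats 2000000 in
open Finset in
/-- Balanced design, `v = (v₁₁, v₁₀, v₀₁, v₀₀)` with
`min(v₁₀, v₀₁) ≥ 1`, `v' = (v₁₁+1, v₁₀−1, v₀₁−1, v₀₀+1)` and
`v° = (v₁₁, v₁₀−1, v₀₁−1, v₀₀)`.  If the pmf of `T(v°, Z')`, with `Z'` uniform on the
assignments of `n − 2` subjects with `m − 1` treated, is symmetric–decreasing on the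
lattice `(m−1)⁻¹ℤ`, then `p(v', n⃗) ≥ p(v, n⃗)`. -/
theorem stmt9 (m : ℕ) (hm : 0 < m) (n : ℕ) (hn : n = 2 * m)
    (Y z : Fin n → Bool) (hz : z ∈ Assign n m)
    (v11 v10 v01 v00 : ℕ) (hsum : v11 + v10 + v01 + v00 = n)
    (h10 : 1 ≤ v10) (h01 : 1 ≤ v01)
    (hSD : ∀ w0 : Fin (n - 2) → Bool × Bool,
      vcount (n - 2) w0 true true = v11 → vcount (n - 2) w0 true false = v10 - 1 →
      vcount (n - 2) w0 false true = v01 - 1 → vcount (n - 2) w0 false false = v00 →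
      SDon (pmfT (n - 2) (m - 1) w0) (lattZ (m - 1)) (sate (n - 2) w0))
    (w w' : Fin n → Bool × Bool)
    (hw : vcount n w true true = v11 ∧ vcount n w true false = v10 ∧
      vcount n w false true = v01 ∧ vcount n w false false = v00)
    (hw' : vcount n w' true true = v11 + 1 ∧ vcount n w' true false = v10 - 1 ∧
      vcount n w' false true = v01 - 1 ∧ vcount n w' false false = v00 + 1) :
    pval n m w Y z ≤ pval n m w' Y z := by
  classical
  obtain ⟨hw11, hw10, hw01, hw00⟩ := hw
  obtain ⟨hw'11, hw'10, hw'01, hw'00⟩ := hw'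
  have hm2 : n - 2 = 2 * (m - 1) := by omega
  set d : ℤ := (v10 : ℤ) - (v01 : ℤ) with hd
  have hnr : (n : ℝ) = 2 * (m : ℝ) := by rw [hn]; push_cast; ring
  -- the two distinguished indices
  have hcard10 : 0 < (univ.filter fun i => w i = (false, true)).card := by
    rw [← vcount_eq_card_fiber n w true false]; omega
  obtain ⟨i₀, hi₀'⟩ := Finset.card_pos.mp hcard10
  have hwi₀ : w i₀ = (false, true) := (Finset.mem_filter.mp hi₀').2
  have hcard01 : 0 < (univ.filter fun i => w i = (true, false)).card := by
    rw [← vcount_eq_card_fiber n w false true]; omega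
  obtain ⟨i₁, hi₁'⟩ := Finset.card_pos.mp hcard01
  have hwi₁ : w i₁ = (true, false) := (Finset.mem_filter.mp hi₁').2
  have hne : i₀ ≠ i₁ := by
    intro h
    rw [h, hwi₁] at hwi₀
    exact absurd hwi₀ (by simp)
  set e : {i : Fin n // ¬(i = i₀ ∨ i = i₁)} ≃ Fin (n - 2) :=
    Fintype.equivFinOfCardEq (card_sub_two i₀ i₁ hne) with he
  set w0 : Fin (n - 2) → Bool × Bool := resw i₀ i₁ e w with hw0def
  set W' : Fin n → Bool × Bool :=
    Function.update (Function.update w i₀ (true, true)) i₁ (false, false) with hW'def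
  have hWi₀ : W' i₀ = (true, true) := by
    rw [hW'def, Function.update_of_ne hne, Function.update_self]
  have hWi₁ : W' i₁ = (false, false) := by
    rw [hW'def, Function.update_self]
  have hresW' : resw i₀ i₁ e W' = w0 := by
    rw [hW'def, resw_update]
  -- counts of w0
  have hvw0 : ∀ p : Bool × Bool,
      (univ.filter fun k => w0 k = p).card
        = (univ.filter fun i => w i = p).card
          - ((if w i₀ = p then 1 else 0) + (if w i₁ = p then 1 else 0)) := by
    intro p
    have h := card_fiber_split i₀ i₁ hne e w p
    rw [← hw0def] at h
    omega
  have hc11 : vcount (n - 2) w0 true true = v11 := by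
    rw [vcount_eq_card_fiber, hvw0, ← vcount_eq_card_fiber n w true true,
      hwi₀, hwi₁, hw11]
    norm_num
  have hc10 : vcount (n - 2) w0 true false = v10 - 1 := by
    rw [vcount_eq_card_fiber, hvw0, ← vcount_eq_card_fiber n w true false,
      hwi₀, hwi₁, hw10]
    norm_num
  have hc01 : vcount (n - 2) w0 false true = v01 - 1 := by
    rw [vcount_eq_card_fiber, hvw0, ← vcount_eq_card_fiber n w false true,
      hwi₀, hwi₁, hw01]
    norm_num
  have hc00 : vcount (n - 2) w0 false false = v00 := by
    rw [vcount_eq_card_fiber, hvw0, ← vcount_eq_card_fiber n w false false,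
      hwi₀, hwi₁, hw00]
    norm_num
  -- counts of W' agree with w'
  have key : ∀ p : Bool × Bool,
      (univ.filter fun i => W' i = p).card
        = ((if W' i₀ = p then 1 else 0) + (if W' i₁ = p then 1 else 0))
          + (univ.filter fun k => w0 k = p).card := by
    intro p
    have h := card_fiber_split i₀ i₁ hne e W' p
    rw [hresW'] at h
    exact h
  have k11 : vcount n W' true true = v11 + 1 := by
    rw [vcount_eq_card_fiber, key, hWi₀, hWi₁,
      ← vcount_eq_card_fiber (n-2) w0 true true, hc11]
    norm_num
    all_goals omega
  have k10 : vcount n W' true false = v10 - 1 := by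
    rw [vcount_eq_card_fiber, key, hWi₀, hWi₁,
      ← vcount_eq_card_fiber (n-2) w0 true false, hc10]
    norm_num
    all_goals omega
  have k01 : vcount n W' false true = v01 - 1 := by
    rw [vcount_eq_card_fiber, key, hWi₀, hWi₁,
      ← vcount_eq_card_fiber (n-2) w0 false true, hc01]
    norm_num
    all_goals omega
  have k00 : vcount n W' false false = v00 + 1 := by
    rw [vcount_eq_card_fiber, key, hWi₀, hWi₁,
      ← vcount_eq_card_fiber (n-2) w0 false false, hc00]
    norm_num
    all_goals omega
  have hvW' : ∀ a b, vcount n w' a b = vcount n W' a b := by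
    intro a b
    rcases a <;> rcases b <;>
      first
        | rw [hw'11, k11]
        | rw [hw'10, k10]
        | rw [hw'01, k01]
        | rw [hw'00, k00]
  have hpv' : pval n m w' Y z = pval n m W' Y z :=
    pval_eq_of_vcount n m w' W' Y z hvW'
  -- sate values
  have hsw : sate n w = (d : ℝ) / (n : ℝ) := by
    rw [sate_counts, hw10, hw01]
  have hsW' : sate n W' = sate n w := by
    have hvtf : vcount n W' true false = v10 - 1 := by rw [← hvW', hw'10]
    have hvft : vcount n W' false true = v01 - 1 := by rw [← hvW', hw'01]
    rw [sate_counts, sate_counts, hw10, hw01, hvtf, hvft]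
    congr 2
    push_cast [h10, h01]
    ring
  rw [hpv']
  unfold pval Pr
  rw [hsW']
  set c : ℝ := |neyman n m Y z - sate n w| with hcdef
  have hc0 : 0 ≤ c := abs_nonneg _
  set R : ℝ := 2 * (m : ℝ) * c with hRdef
  have hR0 : 0 ≤ R := by positivity
  -- fiber counts of the integer statistic
  set A2 := Assign (n - 2) (m - 1) with hA2
  set g : ℤ → ℕ := fun j => (A2.filter fun y => intStat (n - 2) w0 y = j).card with hgdef
  set N2 : ℕ := A2.card with hN2
  have hgle : ∀ j, g j ≤ N2 := fun j => Finset.card_filter_le _ _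
  have hgprop : (∀ j : ℤ, g (d - j) = g j) ∧
      (∀ p q : ℤ, d ≤ 2 * p → p ≤ q → g q ≤ g p) := by
    rcases Nat.eq_zero_or_pos N2 with hN20 | hN2pos
    · have hg0 : ∀ j, g j = 0 := fun j => by have := hgle j; omega
      exact ⟨fun j => by rw [hg0, hg0], fun p q _ _ => by rw [hg0, hg0]⟩
    rcases eq_or_lt_of_le (show 1 ≤ m from hm) with hm1 | hmge2
    · -- m = 1
      have hn2z : n - 2 = 0 := by omega
      have huniv0 : (univ : Finset (Fin (n - 2))) = ∅ := by
        apply Finset.card_eq_zero.mp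
        simp [hn2z]
      have hIS : ∀ y : Fin (n - 2) → Bool, intStat (n - 2) w0 y = 0 := by
        intro y
        unfold intStat
        rw [huniv0]
        simp
      have hd0 : d = 0 := by
        have hv : v10 = 1 ∧ v01 = 1 := by omega
        rw [hd, hv.1, hv.2]; ring
      constructor
      · intro j
        rw [hgdef]
        simp only
        congr 1
        apply Finset.filter_congr
        intro y _
        rw [hIS y, hd0]
        constructor <;> intro h <;> omega
      · intro p q hp hq
        rcases eq_or_ne p q with hpq | hpq
        · rw [hpq]
        · have hq0 : q ≠ 0 := by rw [hd0] at hp; omega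
          have hgq : g q = 0 := by
            rw [hgdef]
            simp only
            rw [Finset.card_eq_zero]
            apply Finset.filter_false_of_mem
            intro y _
            rw [hIS y]
            omega
          omega
    · -- m ≥ 2
      have hm1' : 1 ≤ m - 1 := by omega
      have hm1pos : (0:ℝ) < ((m - 1 : ℕ) : ℝ) := by exact_mod_cast hm1'
      have hm1ne : ((m - 1 : ℕ) : ℝ) ≠ 0 := ne_of_gt hm1pos
      have hN2r : ((N2 : ℕ) : ℝ) ≠ 0 := Nat.cast_ne_zero.mpr hN2pos.ne'
      have hN2pos' : (0:ℝ) < ((N2 : ℕ) : ℝ) := by exact_mod_cast hN2pos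
      have hsd := hSD w0 hc11 hc10 hc01 hc00
      have hμ : sate (n - 2) w0 = (d : ℝ) / (2 * ((m - 1 : ℕ) : ℝ)) := by
        rw [sate_counts, hc10, hc01]
        have hnum : (((v10 - 1 : ℕ) : ℤ) - ((v01 - 1 : ℕ) : ℤ) : ℤ) = d := by
          rw [hd]; push_cast [h10, h01]; ring
        rw [hnum]
        congr 1
        rw [hm2]; push_cast; ring
      have hf : ∀ j : ℤ, pmfT (n - 2) (m - 1) w0 ((j : ℝ) / ((m - 1 : ℕ) : ℝ))
          = (g j : ℝ) / (N2 : ℝ) := by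
        intro j
        unfold pmfT Pr
        rw [hgdef]
        simp only
        congr 2
        congr 1
        ext y
        simp only [Finset.mem_filter, hA2]
        refine and_congr_right fun _ => ?_
        rw [neyman_intStat (n - 2) (m - 1) hm2 w0 y, div_eq_div_iff hm1ne hm1ne]
        constructor
        · intro h
          exact_mod_cast mul_right_cancel₀ hm1ne h
        · intro h
          rw [h]
      constructor
      · intro j
        have hx := hsd.1 ((j : ℝ) / ((m - 1 : ℕ) : ℝ) - sate (n - 2) w0)
          ⟨j, by ring⟩
        have e1 : sate (n - 2) w0 + ((j : ℝ) / ((m - 1 : ℕ) : ℝ) - sate (n - 2) w0)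
            = ((j : ℤ) : ℝ) / ((m - 1 : ℕ) : ℝ) := by ring
        have e2 : sate (n - 2) w0 - ((j : ℝ) / ((m - 1 : ℕ) : ℝ) - sate (n - 2) w0)
            = ((d - j : ℤ) : ℝ) / ((m - 1 : ℕ) : ℝ) := by
          rw [hμ, Int.cast_sub, mul_comm (2:ℝ) ((m - 1 : ℕ) : ℝ), ← div_div, hd]
          push_cast
          ring
        rw [e1, e2, hf, hf] at hx
        rw [div_eq_div_iff hN2r hN2r] at hx
        have hgg : (g (d - j) : ℝ) = g j := mul_right_cancel₀ hN2r hx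
        exact_mod_cast hgg
      · intro p q hp hpq
        have hx0 : 0 ≤ (p : ℝ) / ((m - 1 : ℕ) : ℝ) - sate (n - 2) w0 := by
          rw [hμ]
          have he2 : (p : ℝ) / ((m - 1 : ℕ) : ℝ) - (d : ℝ) / (2 * ((m - 1 : ℕ) : ℝ))
              = (2 * (p : ℝ) - (d : ℝ)) / (2 * ((m - 1 : ℕ) : ℝ)) := by
            rw [mul_comm (2:ℝ) ((m - 1 : ℕ) : ℝ), ← div_div, ← div_div]
            push_cast
            ring
          rw [he2]
          apply div_nonneg
          · have hcast : (d : ℝ) ≤ 2 * (p : ℝ) := by exact_mod_cast hp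
            linarith
          · positivity
        have hxy : (p : ℝ) / ((m - 1 : ℕ) : ℝ) - sate (n - 2) w0
            ≤ (q : ℝ) / ((m - 1 : ℕ) : ℝ) - sate (n - 2) w0 := by
          have hpq' : (p : ℝ) ≤ (q : ℝ) := by exact_mod_cast hpq
          have hdd : (p : ℝ) / ((m - 1 : ℕ) : ℝ) ≤ (q : ℝ) / ((m - 1 : ℕ) : ℝ) := by
            gcongr
          linarith
        have hy := hsd.2 _ _ hx0 hxy ⟨p, by ring⟩ ⟨q, by ring⟩
        have e1 : sate (n - 2) w0 + ((p : ℝ) / ((m - 1 : ℕ) : ℝ) - sate (n - 2) w0)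
            = ((p : ℤ) : ℝ) / ((m - 1 : ℕ) : ℝ) := by ring
        have e2 : sate (n - 2) w0 + ((q : ℝ) / ((m - 1 : ℕ) : ℝ) - sate (n - 2) w0)
            = ((q : ℤ) : ℝ) / ((m - 1 : ℕ) : ℝ) := by ring
        rw [e1, e2, hf, hf] at hy
        rw [div_le_div_iff₀ hN2pos' hN2pos'] at hy
        have hgg := le_of_mul_le_mul_right hy hN2pos'
        exact_mod_cast hgg
  obtain ⟨gsym, gdec⟩ := hgprop
  -- integer window
  set B : ℤ := |d| + ⌈R⌉ + 2 with hB
  set K : Finset ℤ := Finset.Icc (d - B) B with hK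
  have hBR1 : (d : ℝ) + R + 2 ≤ 2 * (B : ℝ) := by
    have h1 : (d : ℝ) ≤ |(d:ℝ)| := le_abs_self _
    have h2 : R ≤ (⌈R⌉ : ℝ) := Int.le_ceil R
    have h3 : (0:ℝ) ≤ (⌈R⌉ : ℝ) := le_trans hR0 h2
    have h4 : (0:ℝ) ≤ |(d:ℝ)| := abs_nonneg _
    have hBr : (B : ℝ) = |(d:ℝ)| + (⌈R⌉:ℝ) + 2 := by
      rw [hB]; push_cast; ring
    rw [hBr]; linarith
  have hBR2 : 2 * ((d : ℝ) - (B:ℝ)) ≤ (d:ℝ) - R - 2 := by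
    have h1 : (d : ℝ) ≤ |(d:ℝ)| := le_abs_self _
    have h2 : R ≤ (⌈R⌉ : ℝ) := Int.le_ceil R
    have h3 : (0:ℝ) ≤ (⌈R⌉ : ℝ) := le_trans hR0 h2
    have h4 : (0:ℝ) ≤ |(d:ℝ)| := abs_nonneg _
    have hBr : (B : ℝ) = |(d:ℝ)| + (⌈R⌉:ℝ) + 2 := by
      rw [hB]; push_cast; ring
    rw [hBr]; linarith
  have hKmem : ∀ j : ℤ, (|2*(j:ℝ) - (d:ℝ)| < R ∨ |2*(j:ℝ) - (d:ℝ) - 2| < R ∨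
      |2*(j:ℝ) - (d:ℝ) + 2| < R) → j ∈ K := by
    intro j hj
    rw [hK, Finset.mem_Icc]
    have hup : 2*(j:ℝ) < (d:ℝ) + R + 2 ∧ (d:ℝ) - R - 2 < 2*(j:ℝ) := by
      rcases hj with h | h | h <;> rcases abs_lt.mp h with ⟨l, r⟩ <;>
        exact ⟨by linarith, by linarith⟩
    constructor
    · have hlt : ((d - B : ℤ):ℝ) < (j:ℝ) := by
        have := lt_of_le_of_lt hBR2 hup.2
        push_cast
        linarith
      exact le_of_lt (by exact_mod_cast hlt)
    · have hlt : (j:ℝ) < (B:ℝ) := by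
        have := lt_of_lt_of_le hup.1 hBR1
        linarith
      exact le_of_lt (by exact_mod_cast hlt)
  -- card-to-sum conversions
  have hL0 : (A2.filter fun y => |2*((intStat (n-2) w0 y : ℤ):ℝ) - (d:ℝ)| < R).card
      = ∑ j ∈ K.filter (fun j : ℤ => |2*(j:ℝ) - (d:ℝ)| < R), g j :=
    card_cond_sum w0 K _ (fun j hj => hKmem j (Or.inl hj))
  have hLm : (A2.filter fun y => |2*((intStat (n-2) w0 y : ℤ):ℝ) - (d:ℝ) - 2| < R).card
      = ∑ j ∈ K.filter (fun j : ℤ => |2*(j:ℝ) - (d:ℝ) - 2| < R), g j :=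
    card_cond_sum w0 K _ (fun j hj => hKmem j (Or.inr (Or.inl hj)))
  have hLp : (A2.filter fun y => |2*((intStat (n-2) w0 y : ℤ):ℝ) - (d:ℝ) + 2| < R).card
      = ∑ j ∈ K.filter (fun j : ℤ => |2*(j:ℝ) - (d:ℝ) + 2| < R), g j :=
    card_cond_sum w0 K _ (fun j hj => hKmem j (Or.inr (Or.inr hj)))
  -- the symmetric-decreasing shift inequalities
  have hsh1 := sd_shift_le g d R gsym gdec 1 (Or.inl rfl) K (by
    intro j hj
    apply hKmem j
    rcases hj with h | h
    · exact Or.inl h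
    · refine Or.inr (Or.inl ?_)
      have he2 : 2 * (((1:ℤ)):ℝ) = 2 := by norm_num
      rwa [he2] at h)
  have hsh2 := sd_shift_le g d R gsym gdec (-1) (Or.inr rfl) K (by
    intro j hj
    apply hKmem j
    rcases hj with h | h
    · exact Or.inl h
    · refine Or.inr (Or.inr ?_)
      have he2 : 2 * ((((-1):ℤ)):ℝ) = -2 := by norm_num
      rw [he2] at h
      rwa [sub_neg_eq_add] at h)
  have hsh1' : ∑ j ∈ K.filter (fun j : ℤ => |2*(j:ℝ) - (d:ℝ) - 2| < R), g j
      ≤ ∑ j ∈ K.filter (fun j : ℤ => |2*(j:ℝ) - (d:ℝ)| < R), g j := by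
    have hseq : K.filter (fun j : ℤ => |2*(j:ℝ) - (d:ℝ) - 2 * ((1:ℤ):ℝ)| < R)
        = K.filter (fun j : ℤ => |2*(j:ℝ) - (d:ℝ) - 2| < R) := by
      apply Finset.filter_congr
      intro j _
      rw [show (2*(j:ℝ) - (d:ℝ) - 2 * ((1:ℤ):ℝ)) = 2*(j:ℝ) - (d:ℝ) - 2 from by
        push_cast; ring]
    rwa [hseq] at hsh1
  have hsh2' : ∑ j ∈ K.filter (fun j : ℤ => |2*(j:ℝ) - (d:ℝ) + 2| < R), g j
      ≤ ∑ j ∈ K.filter (fun j : ℤ => |2*(j:ℝ) - (d:ℝ)| < R), g j := by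
    have hseq : K.filter (fun j : ℤ => |2*(j:ℝ) - (d:ℝ) - 2 * (((-1):ℤ):ℝ)| < R)
        = K.filter (fun j : ℤ => |2*(j:ℝ) - (d:ℝ) + 2| < R) := by
      apply Finset.filter_congr
      intro j _
      rw [show (2*(j:ℝ) - (d:ℝ) - 2 * (((-1):ℤ):ℝ)) = 2*(j:ℝ) - (d:ℝ) + 2 from by
        push_cast; ring]
    rwa [hseq] at hsh2
  -- complements
  have comp0 : (A2.filter fun y => R ≤ |2*((intStat (n-2) w0 y : ℤ):ℝ) - (d:ℝ)|).card
      + (A2.filter fun y => |2*((intStat (n-2) w0 y : ℤ):ℝ) - (d:ℝ)| < R).card = N2 := by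
    have hcc := Finset.card_filter_add_card_filter_not (s := A2)
      (p := fun y => R ≤ |2*((intStat (n-2) w0 y : ℤ):ℝ) - (d:ℝ)|)
    have hnot : (A2.filter fun y => ¬ (R ≤ |2*((intStat (n-2) w0 y : ℤ):ℝ) - (d:ℝ)|))
        = (A2.filter fun y => |2*((intStat (n-2) w0 y : ℤ):ℝ) - (d:ℝ)| < R) := by
      apply Finset.filter_congr
      intro y _
      exact not_le
    rw [hnot] at hcc
    omega
  have compM : (A2.filter fun y => R ≤ |2*((intStat (n-2) w0 y : ℤ):ℝ) - (d:ℝ) - 2|).card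
      + (A2.filter fun y => |2*((intStat (n-2) w0 y : ℤ):ℝ) - (d:ℝ) - 2| < R).card = N2 := by
    have hcc := Finset.card_filter_add_card_filter_not (s := A2)
      (p := fun y => R ≤ |2*((intStat (n-2) w0 y : ℤ):ℝ) - (d:ℝ) - 2|)
    have hnot : (A2.filter fun y => ¬ (R ≤ |2*((intStat (n-2) w0 y : ℤ):ℝ) - (d:ℝ) - 2|))
        = (A2.filter fun y => |2*((intStat (n-2) w0 y : ℤ):ℝ) - (d:ℝ) - 2| < R) := by
      apply Finset.filter_congr
      intro y _
      exact not_le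
    rw [hnot] at hcc
    omega
  have compP : (A2.filter fun y => R ≤ |2*((intStat (n-2) w0 y : ℤ):ℝ) - (d:ℝ) + 2|).card
      + (A2.filter fun y => |2*((intStat (n-2) w0 y : ℤ):ℝ) - (d:ℝ) + 2| < R).card = N2 := by
    have hcc := Finset.card_filter_add_card_filter_not (s := A2)
      (p := fun y => R ≤ |2*((intStat (n-2) w0 y : ℤ):ℝ) - (d:ℝ) + 2|)
    have hnot : (A2.filter fun y => ¬ (R ≤ |2*((intStat (n-2) w0 y : ℤ):ℝ) - (d:ℝ) + 2|))
        = (A2.filter fun y => |2*((intStat (n-2) w0 y : ℤ):ℝ) - (d:ℝ) + 2| < R) := by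
      apply Finset.filter_congr
      intro y _
      exact not_le
    rw [hnot] at hcc
    omega
  -- pattern equivalences
  have hPQ10w : ∀ zz : Fin n → Bool, zz i₀ = true → zz i₁ = false →
      ((|neyman n m (obsOutcome n w zz) zz - sate n w| ≥ c) ↔
        (R ≤ |2*((intStat (n-2) w0 (resz i₀ i₁ e zz) : ℤ):ℝ) - (d:ℝ)|)) := by
    intro zz h0 h1
    rw [neyman_intStat n m hn w zz, hsw, hnr]
    have hsplit : intStat n w zz = intStat (n-2) w0 (resz i₀ i₁ e zz) := by
      rw [intStat_split i₀ i₁ e hne w zz, h0, h1, hwi₀, hwi₁, ← hw0def]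
      simp [tval]
    rw [hsplit, hRdef]
    exact abs_cond_iff m hm _ d c
  have hPQ01w : ∀ zz : Fin n → Bool, zz i₀ = false → zz i₁ = true →
      ((|neyman n m (obsOutcome n w zz) zz - sate n w| ≥ c) ↔
        (R ≤ |2*((intStat (n-2) w0 (resz i₀ i₁ e zz) : ℤ):ℝ) - (d:ℝ)|)) := by
    intro zz h0 h1
    rw [neyman_intStat n m hn w zz, hsw, hnr]
    have hsplit : intStat n w zz = intStat (n-2) w0 (resz i₀ i₁ e zz) := by
      rw [intStat_split i₀ i₁ e hne w zz, h0, h1, hwi₀, hwi₁, ← hw0def]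
      simp [tval]
    rw [hsplit, hRdef]
    exact abs_cond_iff m hm _ d c
  have hPQ10W' : ∀ zz : Fin n → Bool, zz i₀ = true → zz i₁ = false →
      ((|neyman n m (obsOutcome n W' zz) zz - sate n w| ≥ c) ↔
        (R ≤ |2*((intStat (n-2) w0 (resz i₀ i₁ e zz) : ℤ):ℝ) - (d:ℝ) + 2|)) := by
    intro zz h0 h1
    rw [neyman_intStat n m hn W' zz, hsw, hnr]
    have hsplit : intStat n W' zz = intStat (n-2) w0 (resz i₀ i₁ e zz) + 1 := by
      rw [intStat_split i₀ i₁ e hne W' zz, h0, h1, hWi₀, hWi₁, hresW']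
      simp [tval]
      ring
    rw [hsplit, hRdef]
    have hiff := abs_cond_iff m hm (intStat (n-2) w0 (resz i₀ i₁ e zz) + 1) d c
    have hab : 2*((intStat (n-2) w0 (resz i₀ i₁ e zz) + 1 : ℤ):ℝ) - (d:ℝ)
        = 2*((intStat (n-2) w0 (resz i₀ i₁ e zz) : ℤ):ℝ) - (d:ℝ) + 2 := by
      push_cast; ring
    rwa [hab] at hiff
  have hPQ01W' : ∀ zz : Fin n → Bool, zz i₀ = false → zz i₁ = true →
      ((|neyman n m (obsOutcome n W' zz) zz - sate n w| ≥ c) ↔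
        (R ≤ |2*((intStat (n-2) w0 (resz i₀ i₁ e zz) : ℤ):ℝ) - (d:ℝ) - 2|)) := by
    intro zz h0 h1
    rw [neyman_intStat n m hn W' zz, hsw, hnr]
    have hsplit : intStat n W' zz = intStat (n-2) w0 (resz i₀ i₁ e zz) - 1 := by
      rw [intStat_split i₀ i₁ e hne W' zz, h0, h1, hWi₀, hWi₁, hresW']
      simp [tval]
      ring
    rw [hsplit, hRdef]
    have hiff := abs_cond_iff m hm (intStat (n-2) w0 (resz i₀ i₁ e zz) - 1) d c
    have hab : 2*((intStat (n-2) w0 (resz i₀ i₁ e zz) - 1 : ℤ):ℝ) - (d:ℝ)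
        = 2*((intStat (n-2) w0 (resz i₀ i₁ e zz) : ℤ):ℝ) - (d:ℝ) - 2 := by
      push_cast; ring
    rwa [hab] at hiff
  -- mixed pattern cards
  have hmix10 : (1 : ℕ) + 0 + (m - 1) = m := by omega
  have ht10w := card_pattern_bij i₀ i₁ e hne true false (m - 1)
    (by simpa using hmix10)
    (fun zz => |neyman n m (obsOutcome n w zz) zz - sate n w| ≥ c)
    (fun y => R ≤ |2*((intStat (n-2) w0 y : ℤ):ℝ) - (d:ℝ)|) hPQ10w
  have ht01w := card_pattern_bij i₀ i₁ e hne false true (m - 1)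
    (by simpa using hmix10)
    (fun zz => |neyman n m (obsOutcome n w zz) zz - sate n w| ≥ c)
    (fun y => R ≤ |2*((intStat (n-2) w0 y : ℤ):ℝ) - (d:ℝ)|) hPQ01w
  have ht10W' := card_pattern_bij i₀ i₁ e hne true false (m - 1)
    (by simpa using hmix10)
    (fun zz => |neyman n m (obsOutcome n W' zz) zz - sate n w| ≥ c)
    (fun y => R ≤ |2*((intStat (n-2) w0 y : ℤ):ℝ) - (d:ℝ) + 2|) hPQ10W'
  have ht01W' := card_pattern_bij i₀ i₁ e hne false true (m - 1)
    (by simpa using hmix10)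
    (fun zz => |neyman n m (obsOutcome n W' zz) zz - sate n w| ≥ c)
    (fun y => R ≤ |2*((intStat (n-2) w0 y : ℤ):ℝ) - (d:ℝ) - 2|) hPQ01W'
  -- equal patterns
  have hsame : ∀ (a : Bool),
      ((Assign n m).filter fun zz => (zz i₀ = a ∧ zz i₁ = a) ∧
        |neyman n m (obsOutcome n w zz) zz - sate n w| ≥ c).card
      = ((Assign n m).filter fun zz => (zz i₀ = a ∧ zz i₁ = a) ∧
        |neyman n m (obsOutcome n W' zz) zz - sate n w| ≥ c).card := by
    intro a
    congr 1
    apply Finset.filter_congr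
    intro zz _
    refine and_congr_right fun hp => ?_
    have hII : intStat n w zz = intStat n W' zz := by
      rw [intStat_split i₀ i₁ e hne w zz, intStat_split i₀ i₁ e hne W' zz,
        hresW', ← hw0def, hwi₀, hwi₁, hWi₀, hWi₁, hp.1, hp.2]
      rcases a <;> simp [tval]
    rw [neyman_intStat n m hn w zz, neyman_intStat n m hn W' zz, hII]
  -- assemble
  have goalcard :
      ((Assign n m).filter fun zz =>
        |neyman n m (obsOutcome n w zz) zz - sate n w| ≥ c).card
      ≤ ((Assign n m).filter fun zz =>
        |neyman n m (obsOutcome n W' zz) zz - sate n w| ≥ c).card := by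
    have hsplitw := card_filter_pattern_split i₀ i₁
      (fun zz => |neyman n m (obsOutcome n w zz) zz - sate n w| ≥ c)
      (m := m)
    have hsplitW' := card_filter_pattern_split i₀ i₁
      (fun zz => |neyman n m (obsOutcome n W' zz) zz - sate n w| ≥ c)
      (m := m)
    have hs1 := hsame true
    have hs0 := hsame false
    beta_reduce at hsplitw hsplitW' ht10w ht01w ht10W' ht01W'
    rw [hs1, hs0, ht10w, ht01w] at hsplitw
    rw [ht10W', ht01W'] at hsplitW'
    rw [hL0] at comp0
    rw [hLp] at compP
    rw [hLm] at compM
    rw [hsplitw, hsplitW']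
    exact arith3 (arith2 comp0 compP compM hsh1' hsh2')
  have hApos : 0 < (Assign n m).card := Finset.card_pos.mpr ⟨z, hz⟩
  have hgc : (((Assign n m).filter fun zz =>
        |neyman n m (obsOutcome n w zz) zz - sate n w| ≥ c).card : ℝ)
      ≤ (((Assign n m).filter fun zz =>
        |neyman n m (obsOutcome n W' zz) zz - sate n w| ≥ c).card : ℝ) := by
    exact_mod_cast goalcard
  gcongr
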